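/- Let N, d be positive integers and let U be a unitary matrix indexed by Fin N × Fin d. If for every unit vector ψ : Fin d → ℂ the set { (X ⊗ 1) · U · (f ⊗ ψ) : X ∈ Matrix (Fin N) (Fin N) ℂ, f : Fin N → ℂ } spans (Fin N × Fin d) → ℂ (i.e. the Stinespring representation (ℂ^N ⊗ ℂ^d, U_ψ) is minimal for every pure state ψ), then A_r(U) is the full matrix algebra: A_r(U) = ⊤, i.e. every d × d complex matrix belongs to A_r(U). -/

import Mathlib

open scoped Kronecker
open Matrix

/-- The slice `M(f,g)` of an operator on `ℂ^N ⊗ ℂ^d`: the partial trace `Tr_{|g⟩⟨f|}[M]`,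
given by `M(f,g) k l = ∑ i j, conj (f i) * g j * M (i,k) (j,l)`. -/
noncomputable def envSlice {N d : ℕ} (M : Matrix (Fin N × Fin d) (Fin N × Fin d) ℂ)
    (f g : Fin N → ℂ) : Matrix (Fin d) (Fin d) ℂ :=
  Matrix.of fun k l => ∑ i, ∑ j, (starRingEnd ℂ) (f i) * g j * M (i, k) (j, l)

/-- The Environment Algebra `A(U)`: the unital star-subalgebra generated by all slices
`U(f,g)` and `Uᴴ(f,g)`. -/
noncomputable def envAlg {N d : ℕ} (U : Matrix (Fin N × Fin d) (Fin N × Fin d) ℂ) :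
    StarSubalgebra ℂ (Matrix (Fin d) (Fin d) ℂ) :=
  StarAlgebra.adjoin ℂ
    ({A | ∃ f g, A = envSlice U f g} ∪ {A | ∃ f g, A = envSlice Uᴴ f g})

/-- The Environment Right-Action Algebra `A_r(U)`: the unital star-subalgebra generated by all
products `Uᴴ(f₁,g₁) * U(f₂,g₂)`. -/
noncomputable def envActAlg {N d : ℕ} (U : Matrix (Fin N × Fin d) (Fin N × Fin d) ℂ) :
    StarSubalgebra ℂ (Matrix (Fin d) (Fin d) ℂ) :=
  StarAlgebra.adjoin ℂ
    {A | ∃ f₁ g₁ f₂ g₂, A = envSlice Uᴴ f₁ g₁ * envSlice U f₂ g₂}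

namespace EnvP
variable {N d : ℕ}

def tens (f : Fin N → ℂ) (ψ : Fin d → ℂ) : Fin N × Fin d → ℂ := fun p => f p.1 * ψ p.2

lemma slice_pair (M : Matrix (Fin N × Fin d) (Fin N × Fin d) ℂ) (f g : Fin N → ℂ)
    (φ ψ : Fin d → ℂ) :
    star φ ⬝ᵥ (envSlice M f g).mulVec ψ = star (tens f φ) ⬝ᵥ M.mulVec (tens g ψ) := by
  simp only [envSlice, tens, dotProduct, Matrix.mulVec, Pi.star_apply, of_apply,
    Fintype.sum_prod_type, Finset.mul_sum, Finset.sum_mul]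
  conv_lhs => enter [2, k]; rw [Finset.sum_comm]
  conv_lhs => rw [Finset.sum_comm]
  refine Finset.sum_congr rfl fun i _ => ?_
  refine Finset.sum_congr rfl fun k _ => ?_
  rw [Finset.sum_comm]
  refine Finset.sum_congr rfl fun j _ => ?_
  refine Finset.sum_congr rfl fun l _ => ?_
  simp only [star_mul', Complex.star_def]; ring

end EnvP

namespace EnvP
variable {N d : ℕ}

lemma slice_mulVec_eq (U : Matrix (Fin N × Fin d) (Fin N × Fin d) ℂ) (f₂ g₂ : Fin N → ℂ)
    (ψ : Fin d → ℂ) (m : Fin d) :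
    (envSlice U f₂ g₂).mulVec ψ m = ∑ a, star (f₂ a) * (U.mulVec (tens g₂ ψ)) (a, m) := by
  simp only [tens, envSlice, Matrix.mulVec, dotProduct, of_apply, Fintype.sum_prod_type,
    Finset.mul_sum, Finset.sum_mul]
  rw [Finset.sum_comm]
  refine Finset.sum_congr rfl fun a _ => ?_
  conv_rhs => rw [Finset.sum_comm]
  refine Finset.sum_congr rfl fun b _ => ?_
  refine Finset.sum_congr rfl fun l _ => ?_
  simp only [Complex.star_def]; ring

lemma tens_slice (U : Matrix (Fin N × Fin d) (Fin N × Fin d) ℂ) (g₁ f₂ g₂ : Fin N → ℂ)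
    (ψ : Fin d → ℂ) :
    tens g₁ ((envSlice U f₂ g₂).mulVec ψ)
      = ((vecMulVec g₁ (star f₂)) ⊗ₖ (1 : Matrix (Fin d) (Fin d) ℂ)).mulVec
          (U.mulVec (tens g₂ ψ)) := by
  set w := U.mulVec (tens g₂ ψ) with hw
  funext p
  obtain ⟨j, m⟩ := p
  have h1 : tens g₁ ((envSlice U f₂ g₂).mulVec ψ) (j, m)
      = g₁ j * ∑ a, star (f₂ a) * w (a, m) := by
    rw [tens]; simp only []
    rw [slice_mulVec_eq]
  rw [h1]
  simp only [Matrix.mulVec, dotProduct, Fintype.sum_prod_type, kroneckerMap_apply,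
    vecMulVec_apply, Pi.star_apply, Matrix.one_apply, mul_ite, mul_zero, mul_one,
    ite_mul, zero_mul, Finset.mul_sum]
  refine Finset.sum_congr rfl fun a _ => ?_
  rw [Finset.sum_ite_eq Finset.univ m (fun l => g₁ j * star (f₂ a) * w (a, l))]
  simp [mul_assoc]

end EnvP

namespace EnvP
variable {N d : ℕ}

lemma adjoint_dot {n : Type*} [Fintype n] (M : Matrix n n ℂ) (x y : n → ℂ) :
    star x ⬝ᵥ (Mᴴ.mulVec y) = star (M.mulVec x) ⬝ᵥ y := by
  rw [star_mulVec, ← dotProduct_mulVec]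

lemma key_pair (U : Matrix (Fin N × Fin d) (Fin N × Fin d) ℂ) (f₁ g₁ f₂ g₂ : Fin N → ℂ)
    (φ ψ : Fin d → ℂ) :
    star φ ⬝ᵥ ((envSlice Uᴴ f₁ g₁ * envSlice U f₂ g₂).mulVec ψ)
      = star (U.mulVec (tens f₁ φ)) ⬝ᵥ
          (((vecMulVec g₁ (star f₂)) ⊗ₖ (1 : Matrix (Fin d) (Fin d) ℂ)).mulVec
            (U.mulVec (tens g₂ ψ))) := by
  rw [← Matrix.mulVec_mulVec, slice_pair, ← adjoint_dot, ← tens_slice]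

lemma kron_decomp (X : Matrix (Fin N) (Fin N) ℂ) (w : Fin N × Fin d → ℂ) :
    (X ⊗ₖ (1 : Matrix (Fin d) (Fin d) ℂ)).mulVec w
      = ∑ a, ∑ b, X a b •
          (((vecMulVec (Pi.single a 1) (star (Pi.single b (1:ℂ)))) ⊗ₖ
            (1 : Matrix (Fin d) (Fin d) ℂ)).mulVec w) := by
  funext p
  obtain ⟨i, k⟩ := p
  simp only [Matrix.mulVec, dotProduct, Fintype.sum_prod_type, kroneckerMap_apply,
    vecMulVec_apply, Pi.star_apply, Matrix.one_apply, mul_ite, mul_zero, mul_one,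
    ite_mul, zero_mul, Finset.sum_apply, Pi.smul_apply, smul_eq_mul, Finset.mul_sum,
    Pi.single_apply, apply_ite (star : ℂ → ℂ), star_one, star_zero]
  simp [Finset.sum_ite_eq, Finset.sum_ite_eq', Finset.sum_ite_irrel, Finset.sum_const_zero,
    mul_ite, mul_zero, mul_one, ite_mul, zero_mul, one_mul]

lemma span_top_of_dual {n : Type*} [Fintype n] [DecidableEq n] (s : Set (n → ℂ))
    (h : ∀ φ : n → ℂ, (∀ v ∈ s, star φ ⬝ᵥ v = 0) → φ = 0) :
    Submodule.span ℂ s = ⊤ := by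
  by_contra hne
  let e := WithLp.linearEquiv 2 ℂ (n → ℂ)
  let W : Submodule ℂ (EuclideanSpace ℂ n) := (Submodule.span ℂ s).comap e.toLinearMap
  have hW : W ≠ ⊤ := by
    intro htop
    apply hne
    rw [eq_top_iff]
    intro x _
    have : e.symm x ∈ W := by rw [htop]; trivial
    simpa [W] using this
  have hbot : Wᗮ ≠ ⊥ := fun hb => hW (Submodule.orthogonal_eq_bot_iff.mp hb)
  obtain ⟨φ, hφW, hφ0⟩ := Submodule.exists_mem_ne_zero_of_ne_bot hbot
  have key : ∀ v ∈ s, star (e φ) ⬝ᵥ v = 0 := by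
    intro v hv
    have hvW : e.symm v ∈ W := by
      simp only [W, Submodule.mem_comap]
      simpa using Submodule.subset_span hv
    have := (Submodule.mem_orthogonal' _ _).mp hφW _ hvW
    rw [← this]
    simp [PiLp.inner_apply, dotProduct, e, RCLike.inner_apply, mul_comm]
  have := h (e φ) key
  exact hφ0 (by simpa [e] using congrArg e.symm this)

end EnvP

namespace EnvP
variable {N d : ℕ}

lemma gen_span (hN : 0 < N) (U : Matrix (Fin N × Fin d) (Fin N × Fin d) ℂ)
    (hU : Uᴴ * U = 1) (ψ : Fin d → ℂ)
    (hsp : Submodule.span ℂ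
        {v : Fin N × Fin d → ℂ | ∃ (X : Matrix (Fin N) (Fin N) ℂ) (f : Fin N → ℂ),
          v = (X ⊗ₖ (1 : Matrix (Fin d) (Fin d) ℂ)).mulVec
                (U.mulVec fun p => f p.1 * ψ p.2)} = ⊤) :
    Submodule.span ℂ
      {v : Fin d → ℂ | ∃ f₁ g₁ f₂ g₂,
        v = (envSlice Uᴴ f₁ g₁ * envSlice U f₂ g₂).mulVec ψ} = ⊤ := by
  apply span_top_of_dual
  intro φ hφ
  -- the orthogonality transfers to the big space
  set i0 : Fin N := ⟨0, hN⟩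
  set u := U.mulVec (tens (Pi.single i0 1) φ) with hu
  have horth : ∀ g₁ f₂ g₂ : Fin N → ℂ,
      star u ⬝ᵥ (((vecMulVec g₁ (star f₂)) ⊗ₖ (1 : Matrix (Fin d) (Fin d) ℂ)).mulVec
        (U.mulVec (tens g₂ ψ))) = 0 := by
    intro g₁ f₂ g₂
    rw [← key_pair]
    exact hφ _ ⟨Pi.single i0 1, g₁, f₂, g₂, rfl⟩
  -- linear functional vanishing on the generating set of hsp
  let L : (Fin N × Fin d → ℂ) →ₗ[ℂ] ℂ :=
    { toFun := fun v => star u ⬝ᵥ v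
      map_add' := fun x y => dotProduct_add _ x y
      map_smul' := fun c x => dotProduct_smul c _ x }
  have hL : ∀ v ∈ {v : Fin N × Fin d → ℂ | ∃ (X : Matrix (Fin N) (Fin N) ℂ) (f : Fin N → ℂ),
      v = (X ⊗ₖ (1 : Matrix (Fin d) (Fin d) ℂ)).mulVec
            (U.mulVec fun p => f p.1 * ψ p.2)}, L v = 0 := by
    rintro v ⟨X, f, rfl⟩
    have : (U.mulVec fun p => f p.1 * ψ p.2) = U.mulVec (tens f ψ) := rfl
    rw [this, kron_decomp, map_sum]
    refine Finset.sum_eq_zero fun a _ => ?_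
    rw [map_sum]
    refine Finset.sum_eq_zero fun b _ => ?_
    rw [_root_.map_smul]
    have h0 := horth (Pi.single a 1) (Pi.single b 1) f
    simp only [L, LinearMap.coe_mk, AddHom.coe_mk, h0, smul_eq_mul, mul_zero]
  have hker : Submodule.span ℂ _ ≤ LinearMap.ker L := Submodule.span_le.mpr hL
  rw [hsp, top_le_iff] at hker
  have hu0 : star u ⬝ᵥ u = 0 := by
    have : u ∈ LinearMap.ker L := hker ▸ Submodule.mem_top
    exact this
  have huz : u = 0 := by
    open ComplexOrder in exact dotProduct_star_self_eq_zero.mp hu0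
  have htz : tens (Pi.single i0 1) φ = 0 := by
    have h1 : Uᴴ.mulVec u = Uᴴ.mulVec 0 := by rw [huz]
    rw [hu, Matrix.mulVec_mulVec, hU] at h1
    simpa using h1
  funext k
  have := congrFun htz (i0, k)
  simpa [tens] using this

end EnvP

namespace EnvP
variable {N d : ℕ}

/-- Flattening a matrix to a vector. -/
def flatF (A : Matrix (Fin d) (Fin d) ℂ) : Fin d × Fin d → ℂ := fun p => A p.1 p.2

lemma flatF_inj : Function.Injective (flatF (d := d)) := by
  intro A B h
  ext i j
  exact congrFun h (i, j)

lemma kron_flat (A M : Matrix (Fin d) (Fin d) ℂ) :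
    (A ⊗ₖ (1 : Matrix (Fin d) (Fin d) ℂ)).mulVec (flatF M) = flatF (A * M) := by
  funext p
  obtain ⟨i, k⟩ := p
  simp [flatF, Matrix.mulVec, dotProduct, Fintype.sum_prod_type, Matrix.mul_apply,
    Matrix.one_apply, mul_ite, mul_zero, ite_mul, zero_mul, Finset.sum_ite_eq,
    Finset.sum_ite_eq']

lemma kron_conjT (A : Matrix (Fin d) (Fin d) ℂ) :
    (A ⊗ₖ (1 : Matrix (Fin d) (Fin d) ℂ))ᴴ = Aᴴ ⊗ₖ (1 : Matrix (Fin d) (Fin d) ℂ) := by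
  ext p q
  obtain ⟨i, k⟩ := p; obtain ⟨j, l⟩ := q
  simp [Matrix.conjTranspose_apply, Matrix.one_apply, apply_ite (star : ℂ → ℂ), eq_comm]

lemma adjoint_dot' {n : Type*} [Fintype n] (M : Matrix n n ℂ) (x y : n → ℂ) :
    star x ⬝ᵥ (M.mulVec y) = star (Mᴴ.mulVec x) ⬝ᵥ y := by
  conv_lhs => rw [← Matrix.conjTranspose_conjTranspose M]
  rw [adjoint_dot]

end EnvP

namespace EnvP
variable {d : ℕ}

lemma euclid_inner {n : Type*} [Fintype n] (x y : EuclideanSpace ℂ n) :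
    (inner ℂ x y : ℂ) = star (x : n → ℂ) ⬝ᵥ (y : n → ℂ) := by
  simp [PiLp.inner_apply, dotProduct, RCLike.inner_apply, mul_comm]

/-- coercion to Euclidean space -/
def toE {n : Type*} (v : n → ℂ) : EuclideanSpace ℂ n := WithLp.toLp 2 v

set_option maxHeartbeats 1000000 in
theorem starSubalgebra_eq_top_of_commutant_scalar
    (S : StarSubalgebra ℂ (Matrix (Fin d) (Fin d) ℂ))
    (hcomm : ∀ B : Matrix (Fin d) (Fin d) ℂ,
      (∀ A ∈ S, A * B = B * A) → ∃ c : ℂ, B = c • 1) : S = ⊤ := by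
  refine eq_top_iff.mpr fun T _ => ?_
  let flatL : Matrix (Fin d) (Fin d) ℂ →ₗ[ℂ] EuclideanSpace ℂ (Fin d × Fin d) :=
    { toFun := fun A => toE (flatF A)
      map_add' := fun _ _ => rfl
      map_smul' := fun _ _ => rfl }
  let W : Submodule ℂ (EuclideanSpace ℂ (Fin d × Fin d)) :=
    (Subalgebra.toSubmodule S.toSubalgebra).map flatL
  have memW : ∀ x : EuclideanSpace ℂ (Fin d × Fin d),
      x ∈ W ↔ ∃ A ∈ S, toE (flatF A) = x := by
    intro x
    constructor
    · rintro ⟨A, hA, rfl⟩; exact ⟨A, hA, rfl⟩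
    · rintro ⟨A, hA, rfl⟩; exact ⟨A, hA, rfl⟩
  let PL : EuclideanSpace ℂ (Fin d × Fin d) →ₗ[ℂ] EuclideanSpace ℂ (Fin d × Fin d) :=
    W.subtype ∘ₗ (W.orthogonalProjectionOnto).toLinearMap
  have hPLmem : ∀ v, PL v ∈ W := fun v => SetLike.coe_mem _
  have hWinv : ∀ A ∈ S, ∀ x ∈ W,
      toE ((A ⊗ₖ (1 : Matrix (Fin d) (Fin d) ℂ)).mulVec x) ∈ W := by
    intro A hA x hx
    obtain ⟨M, hM, rfl⟩ := (memW x).mp hx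
    rw [memW]
    refine ⟨A * M, S.mul_mem hA hM, ?_⟩
    show toE (flatF (A * M)) = toE ((A ⊗ₖ (1 : Matrix (Fin d) (Fin d) ℂ)).mulVec (flatF M))
    rw [kron_flat]
  have hWorth : ∀ A ∈ S, ∀ y ∈ Wᗮ,
      toE ((A ⊗ₖ (1 : Matrix (Fin d) (Fin d) ℂ)).mulVec y) ∈ Wᗮ := by
    intro A hA y hy
    refine (Submodule.mem_orthogonal _ _).mpr fun w hw => ?_
    have hAH : Aᴴ ∈ S := S.star_mem' hA
    have hw' : toE ((Aᴴ ⊗ₖ (1 : Matrix (Fin d) (Fin d) ℂ)).mulVec w) ∈ W :=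
      hWinv Aᴴ hAH w hw
    have h0 : (inner ℂ (toE ((Aᴴ ⊗ₖ (1 : Matrix (Fin d) (Fin d) ℂ)).mulVec w)) y : ℂ) = 0 :=
      (Submodule.mem_orthogonal W y).mp hy _ hw'
    rw [euclid_inner] at h0 ⊢
    have hstep : star (w : Fin d × Fin d → ℂ) ⬝ᵥ
        ((A ⊗ₖ (1 : Matrix (Fin d) (Fin d) ℂ)).mulVec y)
        = star (((A ⊗ₖ (1 : Matrix (Fin d) (Fin d) ℂ))ᴴ).mulVec w) ⬝ᵥ y :=
      adjoint_dot' _ _ _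
    show star (w : Fin d × Fin d → ℂ) ⬝ᵥ
        ((A ⊗ₖ (1 : Matrix (Fin d) (Fin d) ℂ)).mulVec y) = 0
    rw [hstep, kron_conjT]
    exact h0
  have hPcomm : ∀ A ∈ S, ∀ v : EuclideanSpace ℂ (Fin d × Fin d),
      PL (toE ((A ⊗ₖ (1 : Matrix (Fin d) (Fin d) ℂ)).mulVec v))
        = toE ((A ⊗ₖ (1 : Matrix (Fin d) (Fin d) ℂ)).mulVec (PL v)) := by
    intro A hA v
    have h1 : toE ((A ⊗ₖ (1 : Matrix (Fin d) (Fin d) ℂ)).mulVec (PL v)) ∈ W :=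
      hWinv A hA _ (hPLmem v)
    have h2 : toE ((A ⊗ₖ (1 : Matrix (Fin d) (Fin d) ℂ)).mulVec (v - PL v)) ∈ Wᗮ :=
      hWorth A hA _ (Submodule.sub_starProjection_mem_orthogonal v)
    exact Submodule.eq_starProjection_of_mem_orthogonal' h1 h2
      (by
        show toE ((A ⊗ₖ (1 : Matrix (Fin d) (Fin d) ℂ)).mulVec v)
          = toE ((A ⊗ₖ (1 : Matrix (Fin d) (Fin d) ℂ)).mulVec (PL v))
            + toE ((A ⊗ₖ (1 : Matrix (Fin d) (Fin d) ℂ)).mulVec (v - PL v))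
        unfold toE
        rw [← WithLp.toLp_add]
        congr 1
        show ((A ⊗ₖ (1 : Matrix (Fin d) (Fin d) ℂ)).mulVec v)
          = ((A ⊗ₖ (1 : Matrix (Fin d) (Fin d) ℂ)).mulVec (PL v))
            + ((A ⊗ₖ (1 : Matrix (Fin d) (Fin d) ℂ)).mulVec (v - PL v))
        rw [Matrix.mulVec_sub]
        abel)
  -- the matrix of PL
  let Pmat : Matrix (Fin d × Fin d) (Fin d × Fin d) ℂ :=
    Matrix.of fun p q => PL (toE (Pi.single q 1)) p
  have hPmat : ∀ v : EuclideanSpace ℂ (Fin d × Fin d),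
      (PL v : Fin d × Fin d → ℂ) = Pmat.mulVec v := by
    intro v
    have hv : v = ∑ q : Fin d × Fin d, v q • toE (Pi.single q 1) := by
      apply PiLp.ext; intro p
      rw [WithLp.ofLp_sum, Finset.sum_apply]
      simp [toE, Pi.single_apply, mul_comm]
    conv_lhs => rw [hv, map_sum]
    funext p
    rw [WithLp.ofLp_sum, Finset.sum_apply]
    simp only [_root_.map_smul]
    simp [Matrix.mulVec, dotProduct, Pmat, mul_comm]
  have hPmat_comm : ∀ A ∈ S,
      (A ⊗ₖ (1 : Matrix (Fin d) (Fin d) ℂ)) * Pmat = Pmat * (A ⊗ₖ (1 : Matrix (Fin d) (Fin d) ℂ)) := by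
    intro A hA
    have key : ∀ v : Fin d × Fin d → ℂ,
        ((A ⊗ₖ (1 : Matrix (Fin d) (Fin d) ℂ)) * Pmat).mulVec v
          = (Pmat * (A ⊗ₖ (1 : Matrix (Fin d) (Fin d) ℂ))).mulVec v := by
      intro v
      rw [← Matrix.mulVec_mulVec, ← Matrix.mulVec_mulVec]
      have e1 : Pmat.mulVec v = PL (toE v) := (hPmat (toE v)).symm
      rw [e1]
      have e2 : Pmat.mulVec ((A ⊗ₖ (1 : Matrix (Fin d) (Fin d) ℂ)).mulVec v)
          = PL (toE ((A ⊗ₖ (1 : Matrix (Fin d) (Fin d) ℂ)).mulVec (toE v))) :=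
        (hPmat (toE ((A ⊗ₖ (1 : Matrix (Fin d) (Fin d) ℂ)).mulVec v))).symm
      rw [e2, hPcomm A hA]; rfl
    ext p q
    have := congrFun (key (Pi.single q 1)) p
    simpa [Matrix.mulVec_single] using this
  -- blocks of Pmat are scalars
  have hblocks : ∀ k l : Fin d, ∃ c : ℂ,
      (Matrix.of fun i j => Pmat (i, k) (j, l)) = c • (1 : Matrix (Fin d) (Fin d) ℂ) := by
    intro k l
    apply hcomm
    intro A hA
    ext i j
    have h1 := congrFun (congrFun (hPmat_comm A hA) (i, k)) (j, l)
    have e1 : ((A ⊗ₖ (1 : Matrix (Fin d) (Fin d) ℂ)) * Pmat) (i, k) (j, l)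
        = ∑ m, A i m * Pmat (m, k) (j, l) := by
      rw [Matrix.mul_apply, Fintype.sum_prod_type]
      simp [Matrix.one_apply, ite_mul, zero_mul, Finset.sum_ite_eq, Finset.sum_ite_eq']
    have e2 : (Pmat * (A ⊗ₖ (1 : Matrix (Fin d) (Fin d) ℂ))) (i, k) (j, l)
        = ∑ m, Pmat (i, k) (m, l) * A m j := by
      rw [Matrix.mul_apply, Fintype.sum_prod_type]
      simp [Matrix.one_apply, mul_ite, mul_zero, Finset.sum_ite_eq, Finset.sum_ite_eq']
    rw [e1, e2] at h1
    simpa [Matrix.mul_apply, Matrix.of_apply] using h1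
  choose c hc using hblocks
  -- Pmat commutes with T ⊗ 1 for every T
  have hTcomm : (T ⊗ₖ (1 : Matrix (Fin d) (Fin d) ℂ)) * Pmat
      = Pmat * (T ⊗ₖ (1 : Matrix (Fin d) (Fin d) ℂ)) := by
    have hPentry : ∀ i k j l, Pmat (i, k) (j, l)
        = c k l * (if i = j then (1:ℂ) else 0) := by
      intro i k j l
      have := congrFun (congrFun (hc k l) i) j
      simpa [Matrix.one_apply, Matrix.smul_apply, smul_eq_mul] using this
    ext p q
    obtain ⟨i, k⟩ := p; obtain ⟨j, l⟩ := q
    rw [Matrix.mul_apply, Matrix.mul_apply, Fintype.sum_prod_type, Fintype.sum_prod_type]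
    simp only [kroneckerMap_apply, Matrix.one_apply, hPentry, mul_ite, mul_zero, mul_one,
      ite_mul, zero_mul, one_mul]
    simp [Finset.sum_ite_eq, Finset.sum_ite_eq', Finset.sum_ite_irrel, Finset.sum_const_zero,
      mul_comm, mul_left_comm]
  -- conclude
  have h1W : toE (flatF (1 : Matrix (Fin d) (Fin d) ℂ)) ∈ W :=
    (memW _).mpr ⟨1, S.one_mem, rfl⟩
  have hfix : Pmat.mulVec (flatF (1 : Matrix (Fin d) (Fin d) ℂ))
      = flatF (1 : Matrix (Fin d) (Fin d) ℂ) := by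
    have h := hPmat (toE (flatF 1))
    have h2 : (W.starProjection (toE (flatF 1)) : EuclideanSpace ℂ (Fin d × Fin d))
        = toE (flatF 1) := Submodule.starProjection_eq_self_iff.mpr h1W
    calc Pmat.mulVec (flatF (1 : Matrix (Fin d) (Fin d) ℂ)) = PL (toE (flatF 1)) := h.symm
    _ = flatF 1 := congrArg WithLp.ofLp h2
  have hTW : toE (flatF T) ∈ W := by
    have hT1 : flatF T = (T ⊗ₖ (1 : Matrix (Fin d) (Fin d) ℂ)).mulVec (flatF 1) := by
      rw [kron_flat, mul_one]
    have : flatF T = Pmat.mulVec ((T ⊗ₖ (1 : Matrix (Fin d) (Fin d) ℂ)).mulVec (flatF 1)) := by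
      rw [Matrix.mulVec_mulVec, ← hTcomm, ← Matrix.mulVec_mulVec, hfix, ← hT1]
    rw [this] at *
    have : Pmat.mulVec ((T ⊗ₖ (1 : Matrix (Fin d) (Fin d) ℂ)).mulVec (flatF 1))
        = PL (toE ((T ⊗ₖ (1 : Matrix (Fin d) (Fin d) ℂ)).mulVec (flatF 1))) :=
        (hPmat (toE ((T ⊗ₖ (1 : Matrix (Fin d) (Fin d) ℂ)).mulVec (flatF 1)))).symm
    rw [this]
    exact hPLmem _
  obtain ⟨A, hA, hAT⟩ := (memW _).mp hTW
  have : A = T := flatF_inj (congrArg WithLp.ofLp hAT)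
  exact this ▸ hA

end EnvP

namespace EnvP
variable {N d : ℕ}

theorem commutant_scalar_of_irred (hd : 0 < d)
    (S : StarSubalgebra ℂ (Matrix (Fin d) (Fin d) ℂ))
    (hirr : ∀ E : Submodule ℂ (Fin d → ℂ),
      (∀ A ∈ S, ∀ v ∈ E, A.mulVec v ∈ E) → E ≠ ⊥ → E = ⊤)
    (B : Matrix (Fin d) (Fin d) ℂ) (hB : ∀ A ∈ S, A * B = B * A) :
    ∃ c : ℂ, B = c • 1 := by
  haveI : Nonempty (Fin d) := ⟨⟨0, hd⟩⟩
  haveI : Nontrivial (Fin d → ℂ) := Function.nontrivial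
  obtain ⟨μ, hμ⟩ := Module.End.exists_eigenvalue (Matrix.mulVecLin B)
  set E := Module.End.eigenspace (Matrix.mulVecLin B) μ with hEdef
  have hne : E ≠ ⊥ := hμ
  have hinv : ∀ A ∈ S, ∀ v ∈ E, A.mulVec v ∈ E := by
    intro A hA v hv
    rw [Module.End.mem_eigenspace_iff] at hv ⊢
    rw [Matrix.mulVecLin_apply] at hv ⊢
    rw [Matrix.mulVec_mulVec, ← hB A hA, ← Matrix.mulVec_mulVec, hv, Matrix.mulVec_smul]
  have htop : E = ⊤ := hirr E hinv hne
  refine ⟨μ, ?_⟩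
  ext i j
  have hj : (Pi.single j 1 : Fin d → ℂ) ∈ E := htop ▸ Submodule.mem_top
  rw [Module.End.mem_eigenspace_iff, Matrix.mulVecLin_apply] at hj
  have := congrFun hj i
  simpa [Matrix.mulVec_single, Pi.single_apply, Matrix.one_apply, eq_comm] using this

theorem irred_main (hN : 0 < N) (hd : 0 < d)
    (U : Matrix (Fin N × Fin d) (Fin N × Fin d) ℂ) (hU : Uᴴ * U = 1)
    (hmin : ∀ ψ : Fin d → ℂ, (∑ k, (starRingEnd ℂ) (ψ k) * ψ k = 1) →
      Submodule.span ℂ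
        {v : Fin N × Fin d → ℂ | ∃ (X : Matrix (Fin N) (Fin N) ℂ) (f : Fin N → ℂ),
          v = (X ⊗ₖ (1 : Matrix (Fin d) (Fin d) ℂ)).mulVec
                (U.mulVec fun p => f p.1 * ψ p.2)} = ⊤) :
    ∀ E : Submodule ℂ (Fin d → ℂ),
      (∀ A ∈ envActAlg U, ∀ v ∈ E, A.mulVec v ∈ E) → E ≠ ⊥ → E = ⊤ := by
  intro E hE hne
  obtain ⟨ψ, hψE, hψ0⟩ := Submodule.exists_mem_ne_zero_of_ne_bot hne
  set t := ∑ k, Complex.normSq (ψ k) with htdef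
  have ht : 0 < t := by
    obtain ⟨k, hk⟩ := Function.ne_iff.mp hψ0
    exact Finset.sum_pos' (fun i _ => Complex.normSq_nonneg _)
      ⟨k, Finset.mem_univ k, Complex.normSq_pos.mpr hk⟩
  set r := Real.sqrt t with hrdef
  have hr : 0 < r := Real.sqrt_pos.mpr ht
  set ψ' : Fin d → ℂ := ((r⁻¹ : ℝ) : ℂ) • ψ with hψ'def
  have hψ'E : ψ' ∈ E := E.smul_mem _ hψE
  have hnorm : ∑ k, (starRingEnd ℂ) (ψ' k) * ψ' k = 1 := by
    have h1 : ∀ z : ℂ, (starRingEnd ℂ) z * z = (Complex.normSq z : ℂ) := fun z => by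
      rw [mul_comm, Complex.mul_conj]
    simp only [hψ'def, Pi.smul_apply, smul_eq_mul, h1, Complex.normSq_mul, Complex.normSq_inv,
      Complex.normSq_ofReal, Complex.ofReal_mul, Complex.ofReal_inv]
    rw [← Finset.mul_sum]
    norm_cast
    rw [← htdef, hrdef, Real.mul_self_sqrt ht.le]
    exact inv_mul_cancel₀ ht.ne'
  have hspan := gen_span hN U hU ψ' (hmin ψ' hnorm)
  rw [eq_top_iff, ← hspan]
  apply Submodule.span_le.mpr
  rintro v ⟨f₁, g₁, f₂, g₂, rfl⟩
  exact hE _ (StarAlgebra.subset_adjoin ℂ _ ⟨f₁, g₁, f₂, g₂, rfl⟩) ψ' hψ'E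

end EnvP


/-- if the Stinespring representation `f ↦ U (f ⊗ ψ)` is minimal for every unit
vector `ψ` of the environment, then `A_r(U)` is the full matrix algebra. -/
theorem envActAlg_eq_top_of_all_minimal (N d : ℕ) (hN : 0 < N) (hd : 0 < d)
    (U : Matrix (Fin N × Fin d) (Fin N × Fin d) ℂ)
    (hU : Uᴴ * U = 1) (hU' : U * Uᴴ = 1)
    (hmin : ∀ ψ : Fin d → ℂ, (∑ k, (starRingEnd ℂ) (ψ k) * ψ k = 1) →
      Submodule.span ℂ
        {v : Fin N × Fin d → ℂ | ∃ (X : Matrix (Fin N) (Fin N) ℂ) (f : Fin N → ℂ),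
          v = (X ⊗ₖ (1 : Matrix (Fin d) (Fin d) ℂ)).mulVec
                (U.mulVec fun p => f p.1 * ψ p.2)} = ⊤) :
    envActAlg U = ⊤ := by
  exact EnvP.starSubalgebra_eq_top_of_commutant_scalar (envActAlg U)
    (EnvP.commutant_scalar_of_irred hd (envActAlg U) (EnvP.irred_main hN hd U hU hmin))
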